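/- Let k be even, n a multiple of k, and f(x_1,...,x_k) = Σ_r a_r · x^r a homogeneous skew-symmetric polynomial of degree (k/2)(n-1), summed over weak compositions r of (k/2)(n-1) into k parts. Then the hyperpfaffian of order n of the matrix of values f(x_S) for k-subsets S of [n] satisfies Pf(f(x_S))_{S ∈ binom([n],k)} = (Σ_{β ∈ R_{n,k}} (-1)^β · Π_{i=1}^{n/k} a_{r_i}) · Π_{1 ≤ i < j ≤ n} (x_j − x_i), where the sum is over all β = {r_1,...,r_{n/k}} in R_{n,k}. -/

import Mathlib

open Finset Equiv MvPolynomial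

open scoped Classical

noncomputable section

/-- The position of the `j`-th element of the `i`-th block. -/
def bpos (m k : ℕ) (i : Fin m) (j : Fin k) : Fin (m * k) :=
  ⟨k * (i : ℕ) + (j : ℕ), by
    have hi := i.isLt
    have hj := j.isLt
    calc k * (i : ℕ) + (j : ℕ) < k * (i : ℕ) + k := by omega
      _ = k * ((i : ℕ) + 1) := by ring
      _ ≤ k * m := Nat.mul_le_mul_left k hi
      _ = m * k := Nat.mul_comm k m⟩

/-- Each block of the (oriented) partition is listed in increasing order. -/
def IsBlockMono (m k : ℕ) (π : Equiv.Perm (Fin (m * k))) : Prop :=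
  ∀ i : Fin m, StrictMono fun j : Fin k => π (bpos m k i j)

/-- The blocks are listed in increasing order of their first elements. -/
def IsLeadMono (m k : ℕ) (π : Equiv.Perm (Fin (m * k))) : Prop :=
  ∀ (i i' : Fin m) (j : Fin k), i < i' →
    π (bpos m k i ⟨0, j.pos⟩) < π (bpos m k i' ⟨0, j.pos⟩)

/-- Canonical representative of a set partition of `[n]`, `n = m*k`, into `m` blocks of
size `k`: each block increasing and blocks ordered by their minima. -/
def IsPartRep (m k : ℕ) (π : Equiv.Perm (Fin (m * k))) : Prop :=
  IsBlockMono m k π ∧ IsLeadMono m k π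

/-- A `k`-ary function is skew-symmetric. -/
def IsSkewFun {k : ℕ} {α R : Type*} [CommRing R] (f : (Fin k → α) → R) : Prop :=
  ∀ (σ : Equiv.Perm (Fin k)) (v : Fin k → α),
    f (v ∘ σ) = (Equiv.Perm.sign σ : ℤ) • f v

/-- The hyperpfaffian of a skew-symmetric `k`-ary function on `[m*k]`:
the signed sum over all set partitions of `[m*k]` into `m` blocks of size `k`. -/
def hyperPf (m k : ℕ) {R : Type*} [CommRing R]
    (f : (Fin k → Fin (m * k)) → R) : R :=
  ∑ π ∈ Finset.univ.filter (IsPartRep m k),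
    (Equiv.Perm.sign π : ℤ) • ∏ i : Fin m, f fun j => π (bpos m k i j)

/-- A polynomial in `k` variables is skew-symmetric. -/
def IsSkewPoly {k : ℕ} {R : Type*} [CommRing R] (f : MvPolynomial (Fin k) R) : Prop :=
  ∀ σ : Equiv.Perm (Fin k),
    MvPolynomial.rename (⇑σ) f = (Equiv.Perm.sign σ : ℤ) • f

/-- The hyperpfaffian `Pf (f(x_S))` of the values of a polynomial `f` in `k` variables
at the variables indexed by the `k`-subsets `S` of `[m*k]`. -/
def hyperPfPoly (m k : ℕ) {R : Type*} [CommRing R]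
    (f : MvPolynomial (Fin k) R) : MvPolynomial (Fin (m * k)) R :=
  ∑ π ∈ Finset.univ.filter (IsPartRep m k),
    (Equiv.Perm.sign π : ℤ) •
      ∏ i : Fin m, MvPolynomial.rename (fun j => π (bpos m k i j)) f

/-- The Vandermonde product. -/
def vand (n : ℕ) (R : Type*) [CommRing R] : MvPolynomial (Fin n) R :=
  ∏ p ∈ Finset.univ.filter (fun p : Fin n × Fin n => p.1 < p.2),
    (MvPolynomial.X p.2 - MvPolynomial.X p.1)

/-- The coefficient of `f` at the monomial with exponent vector `r`. -/
def coeffOf {k : ℕ} {R : Type*} [CommRing R] (f : MvPolynomial (Fin k) R)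
    (r : Fin k → ℕ) : R :=
  MvPolynomial.coeff (Finsupp.equivFunOnFinite.symm r) f

/-- Membership in `Γ_{n,k}`: a strictly increasing composition of `k/2*(n-1)`
into `k` distinct nonnegative parts. -/
def InGamma (n k : ℕ) (r : Fin k → ℕ) : Prop :=
  StrictMono r ∧ ∑ j, r j = k / 2 * (n - 1)

/-- Canonical representative of an element `β` of `R_{n,k}`, encoded as a permutation `e` of
`Fin (m*k)` (identified with `{0,…,n-1}`): the blocks of `e` are the compositions of `β`,
each block is increasing and sums to `k/2*(n-1)`, and the blocks are ordered canonically. -/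
def IsWeightRep (m k : ℕ) (e : Equiv.Perm (Fin (m * k))) : Prop :=
  IsPartRep m k e ∧
    ∀ i : Fin m, ∑ j : Fin k, ((e (bpos m k i j)) : ℕ) = k / 2 * (m * k - 1)

/-- The weight of the element `x` of `[m*k]` in the weighted oriented partition with
oriented partition (representative) `π` and weight vectors `w`. -/
def wtOf (m k : ℕ) (π : Equiv.Perm (Fin (m * k))) (w : Fin m → Fin k → ℕ) :
    Fin (m * k) → ℕ := fun x =>
  w ⟨((π.symm x : Fin (m*k)) : ℕ) / k, Nat.div_lt_of_lt_mul (lt_of_lt_of_le (π.symm x).isLt (le_of_eq (Nat.mul_comm m k)))⟩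
    ⟨((π.symm x : Fin (m*k)) : ℕ) % k, Nat.mod_lt _ (by
      have ht := (π.symm x).isLt
      have hk : k ≠ 0 := by rintro rfl; omega
      omega)⟩

end
noncomputable section
namespace Stmt6Aux

variable {m k : ℕ}

def blockEquiv (m k : ℕ) : Fin m × Fin k ≃ Fin (m * k) where
  toFun p := bpos m k p.1 p.2
  invFun x :=
    (⟨(x : ℕ) / k, Nat.div_lt_of_lt_mul (by rw [Nat.mul_comm k m]; exact x.isLt)⟩,
     ⟨(x : ℕ) % k, Nat.mod_lt _ (by
        rcases Nat.eq_zero_or_pos k with h | h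
        · exact absurd x.isLt (by simp [h])
        · exact h)⟩)
  left_inv p := by
    have hk : 0 < k := p.2.pos
    have h1 : (k * (p.1 : ℕ) + (p.2 : ℕ)) / k = (p.1 : ℕ) := by
      rw [Nat.mul_add_div hk, Nat.div_eq_of_lt p.2.isLt, Nat.add_zero]
    have h2 : (k * (p.1 : ℕ) + (p.2 : ℕ)) % k = (p.2 : ℕ) := by
      rw [Nat.mul_add_mod, Nat.mod_eq_of_lt p.2.isLt]
    ext
    · exact h1
    · exact h2
  right_inv x := by
    ext
    exact Nat.div_add_mod (x : ℕ) k

@[simp] lemma blockEquiv_apply (p : Fin m × Fin k) :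
    blockEquiv m k p = bpos m k p.1 p.2 := rfl

@[simp] lemma blockEquiv_symm_bpos (i : Fin m) (j : Fin k) :
    (blockEquiv m k).symm (bpos m k i j) = (i, j) :=
  (blockEquiv m k).symm_apply_apply (i, j)

lemma bpos_surj (x : Fin (m * k)) : ∃ i j, bpos m k i j = x := by
  refine ⟨((blockEquiv m k).symm x).1, ((blockEquiv m k).symm x).2, ?_⟩
  exact (blockEquiv m k).apply_symm_apply x

lemma bpos_inj {i i' : Fin m} {j j' : Fin k}
    (h : bpos m k i j = bpos m k i' j') : i = i' ∧ j = j' := by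
  have := (blockEquiv m k).injective (a₁ := (i, j)) (a₂ := (i', j')) (by simpa using h)
  exact ⟨congrArg Prod.fst this, congrArg Prod.snd this⟩

/-- relabelings preserving the block structure -/
def IsGrp (m k : ℕ) (ρ : Perm (Fin (m * k))) : Prop :=
  ∃ (η : Perm (Fin m)) (g : Fin m → Perm (Fin k)),
    ∀ i j, ρ (bpos m k i j) = bpos m k (η i) (g i j)

lemma isGrp_one : IsGrp m k 1 := ⟨1, fun _ => 1, by simp⟩

lemma IsGrp.mul {ρ₁ ρ₂ : Perm (Fin (m * k))} (h1 : IsGrp m k ρ₁) (h2 : IsGrp m k ρ₂) :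
    IsGrp m k (ρ₁ * ρ₂) := by
  obtain ⟨η₁, g₁, hg1⟩ := h1
  obtain ⟨η₂, g₂, hg2⟩ := h2
  exact ⟨η₁ * η₂, fun i => g₁ (η₂ i) * g₂ i, fun i j => by
    simp [Perm.mul_apply, hg2, hg1]⟩

lemma Perm.apply_inv_self {α : Type*} (f : Perm α) (x : α) : f (f⁻¹ x) = x :=
  f.apply_symm_apply x

lemma Perm.inv_apply_self {α : Type*} (f : Perm α) (x : α) : f⁻¹ (f x) = x :=
  f.symm_apply_apply x

lemma IsGrp.inv {ρ : Perm (Fin (m * k))} (h : IsGrp m k ρ) : IsGrp m k ρ⁻¹ := by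
  obtain ⟨η, g, hg⟩ := h
  refine ⟨η⁻¹, fun i => (g (η⁻¹ i))⁻¹, fun i j => ?_⟩
  apply ρ.injective
  rw [Perm.apply_inv_self, hg]
  simp

lemma sign_isGrp (hk : Even k) {ρ : Perm (Fin (m * k))}
    (η : Perm (Fin m)) (g : Fin m → Perm (Fin k))
    (hg : ∀ i j, ρ (bpos m k i j) = bpos m k (η i) (g i j)) :
    Perm.sign ρ = ∏ i, Perm.sign (g i) := by
  have hρ : ρ = (blockEquiv m k).permCongr
      ((η.prodCongr (Equiv.refl (Fin k))) * (Equiv.prodCongrRight g)) := by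
    apply Equiv.ext
    intro x
    obtain ⟨i, j, rfl⟩ := bpos_surj x
    simp [Equiv.permCongr_apply, Perm.mul_apply, Equiv.prodCongrRight, hg]
  rw [hρ, Equiv.Perm.sign_permCongr, map_mul, Equiv.Perm.sign_prodCongrRight]
  have h1 : Perm.sign (η.prodCongr (Equiv.refl (Fin k)) : Perm (Fin m × Fin k)) = 1 := by
    have := Equiv.Perm.sign_eq_sign_of_equiv
      (η.prodCongr (Equiv.refl (Fin k)) : Perm (Fin m × Fin k))
      (Equiv.prodCongrRight (fun _ : Fin k => η))
      (Equiv.prodComm (Fin m) (Fin k)) (fun x => rfl)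
    rw [this, Equiv.Perm.sign_prodCongrRight, Finset.prod_const, Finset.card_univ, Fintype.card_fin]
    obtain ⟨t, rfl⟩ := hk
    rw [pow_add, ← sq, ← pow_mul, mul_comm t 2, pow_mul, Int.units_sq, one_pow]
  rw [h1, one_mul]

variable {R : Type*} [CommRing R]

lemma zsmul_eq_C_mul {τ : Type*} (z : ℤ) (p : MvPolynomial τ R) :
    z • p = C (z : R) * p := by
  rw [zsmul_eq_mul]
  congr 1

/-- the basic term of the hyperpfaffian sum -/
def trm (m k : ℕ) (f : MvPolynomial (Fin k) R) (π : Perm (Fin (m * k))) :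
    MvPolynomial (Fin (m * k)) R :=
  (Perm.sign π : ℤ) • ∏ i : Fin m, rename (fun j => π (bpos m k i j)) f

variable {m k : ℕ} {f : MvPolynomial (Fin k) R}

lemma trm_mul_grp (hk : Even k) (hskew : IsSkewPoly f)
    {π ρ : Perm (Fin (m * k))} (hρ : IsGrp m k ρ) :
    trm m k f (π * ρ) = trm m k f π := by
  obtain ⟨η, g, hg⟩ := hρ
  have hsign : Perm.sign ρ = ∏ i, Perm.sign (g i) := sign_isGrp hk η g hg
  set u : ℤˣ := ∏ i, Perm.sign (g i) with hu
  have hcastu : ((u : ℤ) : R) = ∏ i, ((Perm.sign (g i) : ℤ) : R) := by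
    rw [hu]; push_cast; rfl
  have hprod : (∏ i : Fin m, rename (fun j => (π * ρ) (bpos m k i j)) f)
      = C ((u : ℤ) : R) *
        ∏ i : Fin m, rename (fun j => π (bpos m k i j)) f := by
    calc (∏ i : Fin m, rename (fun j => (π * ρ) (bpos m k i j)) f)
        = ∏ i : Fin m, rename (fun j => π (bpos m k i (g (η.symm i) j))) f := by
          refine Fintype.prod_equiv η _ _ fun i => ?_
          simp only [Perm.mul_apply, hg, Equiv.symm_apply_apply]
      _ = ∏ i : Fin m, (C ((Perm.sign (g (η.symm i)) : ℤ) : R) *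
            rename (fun j => π (bpos m k i j)) f) := by
          refine Finset.prod_congr rfl fun i _ => ?_
          have h1 : (fun j => π (bpos m k i (g (η.symm i) j)))
              = (fun j => π (bpos m k i j)) ∘ ⇑(g (η.symm i)) := rfl
          rw [h1, ← rename_rename, hskew (g (η.symm i)), map_zsmul, zsmul_eq_C_mul]
      _ = (∏ i : Fin m, C ((Perm.sign (g i) : ℤ) : R)) *
          ∏ i : Fin m, rename (fun j => π (bpos m k i j)) f := by
          rw [Finset.prod_mul_distrib]
          congr 1
          exact Fintype.prod_equiv η.symm _ _ fun i => rfl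
      _ = C ((u : ℤ) : R) *
          ∏ i : Fin m, rename (fun j => π (bpos m k i j)) f := by
          rw [hcastu, map_prod]
  have huu : ((u : ℤ) : R) * ((u : ℤ) : R) = 1 := by
    have h2 := Int.units_mul_self u
    rw [← Int.cast_mul (α := R), ← Units.val_mul, h2]
    simp
  unfold trm
  rw [hprod, map_mul, hsign, zsmul_eq_C_mul, zsmul_eq_C_mul]
  rw [show (((Perm.sign π * u : ℤˣ) : ℤ) : R)
      = (((Perm.sign π : ℤˣ) : ℤ) : R) * ((u : ℤ) : R) from by push_cast; ring]
  rw [map_mul, mul_assoc]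
  congr 1
  rw [← mul_assoc, ← map_mul, huu, map_one, one_mul]

lemma strictMono_val_le {n : ℕ} {w : Fin n → ℕ} (h : StrictMono w) (i : Fin n) :
    (i : ℕ) ≤ w i := by
  have key : ∀ t (ht : t < n), t ≤ w ⟨t, ht⟩ := by
    intro t
    induction t with
    | zero => intro ht; exact Nat.zero_le _
    | succ s ih =>
      intro ht
      have hs : s < n := by omega
      have h1 := h (show (⟨s, hs⟩ : Fin n) < ⟨s + 1, ht⟩ from by simp [Fin.lt_def])
      have h2 := ih hs
      omega
  exact key i i.isLt

lemma strictMono_perm_eq_one {n : ℕ} {σ : Perm (Fin n)} (h : StrictMono ⇑σ) : σ = 1 := by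
  have hinv : StrictMono ⇑σ⁻¹ := by
    intro a b hab
    have := h.lt_iff_lt (a := σ⁻¹ a) (b := σ⁻¹ b)
    simp only [Perm.apply_inv_self] at this
    exact this.mp hab
  have h1 : ∀ i : Fin n, (i : ℕ) ≤ (σ i : ℕ) :=
    strictMono_val_le (Fin.val_strictMono.comp h)
  have h2 : ∀ i : Fin n, (i : ℕ) ≤ (σ⁻¹ i : ℕ) :=
    strictMono_val_le (Fin.val_strictMono.comp hinv)
  apply Equiv.ext
  intro i
  have h3 := h2 (σ i)
  rw [Perm.inv_apply_self] at h3
  exact Fin.ext (le_antisymm h3 (h1 i))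

lemma exists_grp_rep (m k : ℕ) (π : Perm (Fin (m * k))) :
    ∃ ρ, IsGrp m k ρ ∧ IsPartRep m k (π * ρ) := by
  rcases Nat.eq_zero_or_pos k with hk0 | hk0
  · subst hk0
    exact ⟨1, isGrp_one, fun i => (fun a b hab => absurd a.isLt (by omega)),
      fun i i' j _ => absurd j.isLt (by omega)⟩
  · set σs : Fin m → Perm (Fin k) := fun i => Tuple.sort (fun j => π (bpos m k i j)) with hσs
    have hblock : ∀ i, StrictMono (fun j => π (bpos m k i (σs i j))) := by
      intro i
      apply Monotone.strictMono_of_injective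
      · exact Tuple.monotone_sort (fun j => π (bpos m k i j))
      · intro a b hab
        have := (bpos_inj (π.injective hab)).2
        exact (σs i).injective this
    set L : Fin m → Fin (m * k) := fun i => π (bpos m k i (σs i ⟨0, hk0⟩)) with hL
    have hLinj : Function.Injective L := by
      intro a b hab
      exact (bpos_inj (π.injective hab)).1
    set η : Perm (Fin m) := Tuple.sort L with hη
    have hlead : StrictMono (fun i => L (η i)) :=
      Monotone.strictMono_of_injective (Tuple.monotone_sort L) (hLinj.comp η.injective)
    set e : Perm (Fin m × Fin k) :=
      (Equiv.prodCongrRight (fun i => σs (η i))).trans (η.prodCongr (Equiv.refl (Fin k))) with he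
    set ρ := (blockEquiv m k).permCongr e with hρ
    have hρap : ∀ i j, ρ (bpos m k i j) = bpos m k (η i) (σs (η i) j) := by
      intro i j
      simp [hρ, he, Equiv.permCongr_apply, Equiv.prodCongrRight]
    refine ⟨ρ, ⟨η, fun i => σs (η i), hρap⟩, ?_, ?_⟩
    · intro i a b hab
      have := hblock (η i) hab
      simpa [Perm.mul_apply, hρap] using this
    · intro i i' j hii'
      have h0 : ∀ i0, (π * ρ) (bpos m k i0 ⟨0, j.pos⟩) = L (η i0) := by
        intro i0
        simp [Perm.mul_apply, hρap, hL]
      rw [h0, h0]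
      exact hlead hii'

lemma rep_unique {m k : ℕ} {π ρ : Perm (Fin (m * k))} (hπ : IsPartRep m k π)
    (hρ : IsGrp m k ρ) (h2 : IsPartRep m k (π * ρ)) : ρ = 1 := by
  rcases Nat.eq_zero_or_pos k with hk0 | hk0
  · subst hk0
    exact Equiv.ext fun x => absurd x.isLt (by omega)
  obtain ⟨η, g, hg⟩ := hρ
  have hgone : ∀ i, g i = 1 := by
    intro i
    apply strictMono_perm_eq_one
    have hb : StrictMono (fun j => π (bpos m k (η i) j)) := hπ.1 (η i)
    have hbg : StrictMono (fun j => π (bpos m k (η i) (g i j))) := by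
      intro a b hab
      have := h2.1 i hab
      simpa [Perm.mul_apply, hg] using this
    intro a b hab
    exact hb.lt_iff_lt.mp (hbg hab)
  have hηone : η = 1 := by
    apply strictMono_perm_eq_one
    have hLmono : StrictMono (fun i => π (bpos m k i ⟨0, hk0⟩)) := by
      intro a b hab
      exact hπ.2 a b ⟨0, hk0⟩ hab
    have hLη : StrictMono (fun i => π (bpos m k (η i) ⟨0, hk0⟩)) := by
      intro a b hab
      have := h2.2 a b ⟨0, hk0⟩ hab
      simpa [Perm.mul_apply, hg, hgone] using this
    intro a b hab
    exact hLmono.lt_iff_lt.mp (hLη hab)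
  apply Equiv.ext
  intro x
  obtain ⟨i, j, rfl⟩ := bpos_surj x
  rw [hg, hgone, hηone]
  simp

def canonρ (m k : ℕ) (π : Perm (Fin (m * k))) : Perm (Fin (m * k)) :=
  Classical.choose (exists_grp_rep m k π)

lemma canonρ_spec (m k : ℕ) (π : Perm (Fin (m * k))) :
    IsGrp m k (canonρ m k π) ∧ IsPartRep m k (π * canonρ m k π) :=
  Classical.choose_spec (exists_grp_rep m k π)

def canon (m k : ℕ) (π : Perm (Fin (m * k))) : Perm (Fin (m * k)) :=
  π * canonρ m k π

lemma canon_isRep (m k : ℕ) (π : Perm (Fin (m * k))) : IsPartRep m k (canon m k π) :=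
  (canonρ_spec m k π).2

lemma canon_fiber {m k : ℕ} {π₀ : Perm (Fin (m * k))} (hπ₀ : IsPartRep m k π₀)
    (π : Perm (Fin (m * k))) :
    canon m k π = π₀ ↔ ∃ ρ, IsGrp m k ρ ∧ π = π₀ * ρ := by
  constructor
  · intro h
    refine ⟨(canonρ m k π)⁻¹, (canonρ_spec m k π).1.inv, ?_⟩
    rw [← h]
    simp [canon, mul_assoc]
  · rintro ⟨ρ, hρ, rfl⟩
    have hmul : IsGrp m k (ρ * canonρ m k (π₀ * ρ)) := hρ.mul (canonρ_spec m k (π₀ * ρ)).1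
    have hone : ρ * canonρ m k (π₀ * ρ) = 1 := by
      apply rep_unique hπ₀ hmul
      rw [← mul_assoc]
      exact canon_isRep m k (π₀ * ρ)
    rw [canon, mul_assoc, hone, mul_one]

lemma fiber_card {m k : ℕ} {π₀ : Perm (Fin (m * k))} (hπ₀ : IsPartRep m k π₀) :
    (univ.filter (fun π => canon m k π = π₀)).card
      = (univ.filter (IsGrp m k)).card := by
  refine Finset.card_bij (fun π _ => π₀⁻¹ * π) ?_ ?_ ?_
  · intro π hπ
    obtain ⟨ρ, hρ, rfl⟩ := (canon_fiber hπ₀ π).mp (mem_filter.mp hπ).2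
    simpa using hρ
  · intro a ha b hb hab
    exact mul_left_cancel hab
  · intro ρ hρ
    refine ⟨π₀ * ρ, mem_filter.mpr ⟨mem_univ _, (canon_fiber hπ₀ _).mpr
      ⟨ρ, (mem_filter.mp hρ).2, rfl⟩⟩, by simp⟩

lemma sum_trm (hk : Even k) (hskew : IsSkewPoly f) :
    ∑ π : Perm (Fin (m * k)), trm m k f π
      = (univ.filter (IsGrp m k)).card • hyperPfPoly m k f := by
  have hmaps : ∀ π ∈ (univ : Finset (Perm (Fin (m * k)))),
      canon m k π ∈ univ.filter (IsPartRep m k) :=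
    fun π _ => mem_filter.mpr ⟨mem_univ _, canon_isRep m k π⟩
  rw [← Finset.sum_fiberwise_of_maps_to hmaps (trm m k f)]
  unfold hyperPfPoly
  rw [Finset.smul_sum]
  refine Finset.sum_congr rfl fun π₀ hπ₀ => ?_
  have hrep := (mem_filter.mp hπ₀).2
  have hterm : ∀ π ∈ univ.filter (fun π => canon m k π = π₀),
      trm m k f π = trm m k f π₀ := by
    intro π hπ
    obtain ⟨ρ, hρ, rfl⟩ := (canon_fiber hrep π).mp (mem_filter.mp hπ).2
    exact trm_mul_grp hk hskew hρ
  rw [Finset.sum_congr rfl hterm, Finset.sum_const, fiber_card hrep]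
  rfl

lemma grp_card_pos (m k : ℕ) : 0 < (univ.filter (IsGrp m k)).card :=
  Finset.card_pos.mpr ⟨1, mem_filter.mpr ⟨mem_univ _, isGrp_one⟩⟩

def stairP {n : ℕ} (σ : Perm (Fin n)) : Fin n →₀ ℕ :=
  Finsupp.equivFunOnFinite.symm (fun y => ((σ.symm y : Fin n) : ℕ))

lemma stairP_apply {n : ℕ} (σ : Perm (Fin n)) (y : Fin n) :
    stairP σ y = ((σ.symm y : Fin n) : ℕ) := by
  simp [stairP]

lemma stairP_one {n : ℕ} :
    stairP (1 : Perm (Fin n)) = Finsupp.equivFunOnFinite.symm (fun x : Fin n => (x : ℕ)) := by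
  ext y
  simp [stairP_apply]
  rfl

lemma mapDomain_stairP {n : ℕ} (σ τ : Perm (Fin n)) :
    Finsupp.mapDomain ⇑σ (stairP τ) = stairP (σ * τ) := by
  ext y
  rw [Finsupp.mapDomain_equiv_apply (f := (σ : Fin n ≃ Fin n))]
  simp [stairP_apply, Equiv.Perm.mul_def]

lemma stairP_injective {n : ℕ} : Function.Injective (stairP (n := n)) := by
  intro σ τ h
  have h2 : ∀ y, ((σ.symm y : Fin n) : ℕ) = ((τ.symm y : Fin n) : ℕ) := by
    intro y
    rw [← stairP_apply, ← stairP_apply, h]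
  have h3 : σ.symm = τ.symm := Equiv.ext fun y => Fin.ext (h2 y)
  rw [← Equiv.symm_symm σ, h3, Equiv.symm_symm]

lemma sum_stairP {n : ℕ} (σ : Perm (Fin n)) :
    ∑ y, stairP σ y = ∑ y : Fin n, (y : ℕ) := by
  simp only [stairP_apply]
  exact Equiv.sum_comp σ.symm (fun z : Fin n => (z : ℕ))

lemma stair_sum_eq {m k : ℕ} (hk : Even k) :
    ∑ x : Fin (m * k), (x : ℕ) = m * (k / 2 * (m * k - 1)) := by
  obtain ⟨t, rfl⟩ := hk
  have h1 : (∑ i ∈ Finset.range (m * (t + t)), i) * 2 = m * (t + t) * (m * (t + t) - 1) :=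
    Finset.sum_range_id_mul_two (m * (t + t))
  have h2 : ∑ x : Fin (m * (t + t)), (x : ℕ) = ∑ i ∈ Finset.range (m * (t + t)), i :=
    Fin.sum_univ_eq_sum_range (fun i => i) (m * (t + t))
  have h3 : (t + t) / 2 = t := by omega
  rw [h2, h3]
  have h4 : m * (t + t) * (m * (t + t) - 1) = (m * (t * (m * (t + t) - 1))) * 2 := by ring
  omega

section Alternating

variable {R : Type*} [CommRing R] {n : ℕ} {P : MvPolynomial (Fin n) R}

lemma sign_cast_mul_self {α : Type*} (σ : Perm α) [DecidableEq α] [Fintype α] :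
    ((Perm.sign σ : ℤˣ) : ℤ) * ((Perm.sign σ : ℤˣ) : ℤ) = 1 := by
  rw [← Units.val_mul, Int.units_mul_self]
  rfl

lemma coeff_mapDomain_alt
    (halt : ∀ σ : Perm (Fin n), rename ⇑σ P = (Perm.sign σ : ℤ) • P)
    (σ : Perm (Fin n)) (d : Fin n →₀ ℕ) :
    coeff (Finsupp.mapDomain ⇑σ d) P = (Perm.sign σ : ℤ) • coeff d P := by
  have h := coeff_rename_mapDomain ⇑σ σ.injective P d
  rw [halt σ, coeff_smul] at h
  rw [← h, smul_smul, sign_cast_mul_self, one_smul]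

end Alternating

section Vand

variable {R : Type*} [CommRing R] {n : ℕ}

lemma monomial_stairP (σ : Perm (Fin n)) :
    (monomial (stairP σ) (1 : R)) = ∏ i : Fin n, (X (σ i) : MvPolynomial (Fin n) R) ^ (i : ℕ) := by
  rw [monomial_eq, map_one, one_mul, Finsupp.prod_fintype _ _ (fun y => pow_zero _)]
  exact (Fintype.prod_equiv σ (fun i => (X (σ i) : MvPolynomial (Fin n) R) ^ (i : ℕ))
    (fun y => (X y : MvPolynomial (Fin n) R) ^ (stairP σ y))
    (fun x => by simp [stairP_apply])).symm

lemma vand_eq (n : ℕ) (R : Type*) [CommRing R] :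
    vand n R = ∑ σ : Perm (Fin n), (Perm.sign σ : ℤ) • monomial (stairP σ) (1 : R) := by
  have h1 : vand n R
      = (Matrix.vandermonde (fun i : Fin n => (X i : MvPolynomial (Fin n) R))).det := by
    unfold vand
    rw [Matrix.det_vandermonde, Finset.prod_sigma']
    refine Finset.prod_bij
      (fun (p : Fin n × Fin n) _ => (⟨p.1, p.2⟩ : Σ _ : Fin n, Fin n)) ?_ ?_ ?_ (fun p _ => rfl)
    · intro p hp
      simp only [Finset.mem_filter] at hp
      simp [Finset.mem_sigma, Finset.mem_Ioi, hp.2]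
    · intro a ha b hb hab
      have g1 := congrArg Sigma.fst hab
      have g2 := congrArg Sigma.snd hab
      exact Prod.ext g1 g2
    · intro x hx
      exact ⟨(x.1, x.2), Finset.mem_filter.mpr ⟨Finset.mem_univ _,
        by simpa [Finset.mem_Ioi] using (Finset.mem_sigma.mp hx).2⟩, rfl⟩
  rw [h1, Matrix.det_apply]
  refine Finset.sum_congr rfl fun σ _ => ?_
  rw [monomial_stairP, Units.smul_def]
  rfl

lemma coeff_vand (d : Fin n →₀ ℕ) :
    coeff d (vand n R)
      = ∑ σ : Perm (Fin n), if stairP σ = d then ((Perm.sign σ : ℤ) : R) else 0 := by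
  rw [vand_eq, coeff_sum]
  refine Finset.sum_congr rfl fun σ _ => ?_
  rw [coeff_smul, coeff_monomial]
  split_ifs with h
  · simp [zsmul_eq_mul]
  · simp

end Vand

section PChunk

variable {R : Type*} [CommRing R] {m k : ℕ} {f : MvPolynomial (Fin k) R}

lemma rename_sum_trm (σ : Perm (Fin (m * k))) :
    rename ⇑σ (∑ π : Perm (Fin (m * k)), trm m k f π)
      = (Perm.sign σ : ℤ) • ∑ π : Perm (Fin (m * k)), trm m k f π := by
  rw [map_sum]
  have h1 : ∀ π : Perm (Fin (m * k)),
      rename ⇑σ (trm m k f π) = (Perm.sign σ : ℤ) • trm m k f (σ * π) := by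
    intro π
    unfold trm
    rw [map_zsmul, map_prod, smul_smul]
    have h2 : ∀ i : Fin m, rename ⇑σ (rename (fun j => π (bpos m k i j)) f)
        = rename (fun j => (σ * π) (bpos m k i j)) f := by
      intro i
      rw [rename_rename]
      rfl
    rw [Finset.prod_congr rfl fun i _ => h2 i]
    congr 1
    rw [map_mul]
    push_cast
    rw [← mul_assoc, ← Units.val_mul, Int.units_mul_self]
    simp
  rw [Finset.sum_congr rfl fun π _ => h1 π, ← Finset.smul_sum]
  congr 1
  exact Fintype.sum_equiv (Equiv.mulLeft σ) _ _ (fun π => rfl)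

lemma sum_trm_isHomogeneous {D : ℕ} (hhom : f.IsHomogeneous D) :
    (∑ π : Perm (Fin (m * k)), trm m k f π).IsHomogeneous (m * D) := by
  apply MvPolynomial.IsHomogeneous.sum
  intro π _
  unfold trm
  rw [zsmul_eq_C_mul]
  have hprod : (∏ i : Fin m, rename (fun j => π (bpos m k i j)) f).IsHomogeneous
      (∑ _i : Fin m, D) :=
    MvPolynomial.IsHomogeneous.prod univ _ _ (fun i _ => hhom.rename_isHomogeneous)
  have h := (isHomogeneous_C (Fin (m * k)) ((Perm.sign π : ℤ) : R)).mul hprod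
  rw [zero_add] at h
  have hD : (∑ _i : Fin m, D) = m * D := by
    rw [Finset.sum_const, Finset.card_univ, Fintype.card_fin, smul_eq_mul]
  rwa [hD] at h

end PChunk

section Support

variable {R : Type*} [Field R] [CharZero R] {n : ℕ} {P : MvPolynomial (Fin n) R}

lemma coeff_eq_zero_of_not_inj
    (halt : ∀ σ : Perm (Fin n), rename ⇑σ P = (Perm.sign σ : ℤ) • P)
    {d : Fin n →₀ ℕ} {a b : Fin n} (hab : d a = d b) (hne : a ≠ b) :
    coeff d P = 0 := by
  have hswap : Finsupp.mapDomain ⇑(Equiv.swap a b) d = d := by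
    ext y
    rw [Finsupp.mapDomain_equiv_apply (f := (Equiv.swap a b : Fin n ≃ Fin n))]
    rcases eq_or_ne y a with rfl | hya
    · simp [Equiv.swap_apply_def, hab]
    rcases eq_or_ne y b with rfl | hyb
    · simp [Equiv.swap_apply_def, hab, hya]
    · simp [Equiv.swap_apply_def, hya, hyb]
  have h := coeff_mapDomain_alt halt (Equiv.swap a b) d
  rw [hswap, Equiv.Perm.sign_swap hne] at h
  have h2 : coeff d P = - coeff d P := by
    simpa using h
  have h3 : (2 : R) * coeff d P = 0 := by
    rw [two_mul]
    nth_rewrite 1 [h2]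
    ring
  rcases mul_eq_zero.mp h3 with h4 | h4
  · exact absurd h4 two_ne_zero
  · exact h4

lemma support_is_stair
    (halt : ∀ σ : Perm (Fin n), rename ⇑σ P = (Perm.sign σ : ℤ) • P)
    (hhom : P.IsHomogeneous (∑ x : Fin n, (x : ℕ)))
    {d : Fin n →₀ ℕ} (hd : coeff d P ≠ 0) : ∃ σ : Perm (Fin n), d = stairP σ := by
  have hinj : Function.Injective (⇑d : Fin n → ℕ) := by
    intro a b hab
    by_contra hne
    exact hd (coeff_eq_zero_of_not_inj halt hab hne)
  have hdeg : ∑ x : Fin n, d x = ∑ x : Fin n, (x : ℕ) := by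
    by_contra hne
    apply hd
    apply hhom.coeff_eq_zero
    have : d.degree = ∑ x : Fin n, d x := by
      rw [Finsupp.degree]
      exact Finset.sum_subset (Finset.subset_univ _)
        (fun x _ hx => Finsupp.notMem_support_iff.mp hx)
    rw [this]
    exact hne
  set v : Fin n → ℕ := ⇑d with hv
  set τ := Tuple.sort v with hτ
  have hw : StrictMono (v ∘ ⇑τ) :=
    Monotone.strictMono_of_injective (Tuple.monotone_sort v) (hinj.comp τ.injective)
  have hge : ∀ i : Fin n, (i : ℕ) ≤ v (τ i) := fun i => strictMono_val_le hw i
  have hsum2 : ∑ i, v (τ i) = ∑ i : Fin n, (i : ℕ) := by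
    rw [Equiv.sum_comp τ v]
    exact hdeg
  have heq : ∀ i, v (τ i) = (i : ℕ) := by
    by_contra hc
    push_neg at hc
    obtain ⟨i₀, hi₀⟩ := hc
    have hlt : (i₀ : ℕ) < v (τ i₀) := lt_of_le_of_ne (hge i₀) (Ne.symm hi₀)
    have := Finset.sum_lt_sum (fun i (_ : i ∈ univ) => hge i) ⟨i₀, mem_univ _, hlt⟩
    omega
  refine ⟨τ, ?_⟩
  ext y
  rw [stairP_apply]
  have h5 := heq (τ.symm y)
  rw [Equiv.apply_symm_apply] at h5
  exact h5

end Support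

section CoeffStair

variable {R : Type*} [CommRing R] {m k : ℕ} {f : MvPolynomial (Fin k) R}

lemma prod_monomial {ι τ : Type*} (s : Finset ι) (d : ι → (τ →₀ ℕ)) (c : ι → R) :
    (∏ i ∈ s, monomial (d i) (c i)) = monomial (∑ i ∈ s, d i) (∏ i ∈ s, c i) := by
  induction s using Finset.cons_induction with
  | empty => simp
  | cons a s ha ih => rw [Finset.prod_cons, Finset.sum_cons, Finset.prod_cons, ih, monomial_mul]

lemma degree_equivFun {α : Type*} [Fintype α] (r : α → ℕ) :
    (Finsupp.equivFunOnFinite.symm r).degree = ∑ j, r j := by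
  rw [Finsupp.degree_apply]
  rw [Finset.sum_subset (Finset.subset_univ _)
    (fun x _ hx => Finsupp.notMem_support_iff.mp hx)]
  simp

lemma coeff_stair_prod (π : Perm (Fin (m * k))) :
    coeff (stairP (1 : Perm (Fin (m * k))))
        (∏ i : Fin m, rename (fun j => π (bpos m k i j)) f)
      = ∏ i : Fin m, coeffOf f (fun j => ((π (bpos m k i j)) : ℕ)) := by
  set g : Fin m → Fin k → Fin (m * k) := fun i j => π (bpos m k i j) with hgdef
  have hginj : ∀ i, Function.Injective (g i) := by
    intro i a b hab
    exact (bpos_inj (π.injective hab)).2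
  have hgdisj : ∀ {i i' : Fin m} {j j' : Fin k}, g i j = g i' j' → i = i' := by
    intro i i' j j' h
    exact (bpos_inj (π.injective h)).1
  have hgsurj : ∀ x : Fin (m * k), ∃ i j, g i j = x := by
    intro x
    obtain ⟨i, j, hij⟩ := bpos_surj (π.symm x)
    exact ⟨i, j, by rw [hgdef]; simp only [hij, Equiv.apply_symm_apply]⟩
  set t₀ : Fin m → (Fin k →₀ ℕ) :=
    fun i => Finsupp.equivFunOnFinite.symm (fun j => ((g i j : Fin (m * k)) : ℕ)) with ht₀
  -- evaluation of the block sums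
  have heval : ∀ (t : Fin m → (Fin k →₀ ℕ)) (i : Fin m) (j : Fin k),
      (∑ i' : Fin m, Finsupp.mapDomain (g i') (t i')) (g i j) = t i j := by
    intro t i j
    rw [Finsupp.finset_sum_apply]
    rw [Finset.sum_eq_single i]
    · exact Finsupp.mapDomain_apply (hginj i) (t i) j
    · intro i' _ hne
      apply Finsupp.mapDomain_notin_range
      rintro ⟨j', hj'⟩
      exact hne (hgdisj hj')
    · intro h
      exact absurd (mem_univ i) h
  have key1 : (∑ i : Fin m, Finsupp.mapDomain (g i) (t₀ i))
      = stairP (1 : Perm (Fin (m * k))) := by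
    ext x
    obtain ⟨i, j, rfl⟩ := hgsurj x
    rw [heval t₀ i j, stairP_apply]
    simp [ht₀]
    rfl
  have key2 : ∀ t : Fin m → (Fin k →₀ ℕ),
      (∑ i : Fin m, Finsupp.mapDomain (g i) (t i)) = stairP (1 : Perm (Fin (m * k)))
        → t = t₀ := by
    intro t ht
    funext i
    ext j
    have h1 := heval t i j
    rw [ht, stairP_apply] at h1
    have h2 : t₀ i j = ((g i j : Fin (m * k)) : ℕ) := by simp [ht₀]
    rw [h2, ← h1]
    rfl
  -- expand the product
  have hexp : (∏ i : Fin m, rename (fun j => π (bpos m k i j)) f)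
      = ∑ t ∈ Fintype.piFinset (fun _ : Fin m => f.support),
          monomial (∑ i : Fin m, Finsupp.mapDomain (g i) (t i))
            (∏ i : Fin m, coeff (t i) f) := by
    have hstep : ∀ i : Fin m, rename (fun j => π (bpos m k i j)) f
        = ∑ r ∈ f.support, monomial (Finsupp.mapDomain (g i) r) (coeff r f) := by
      intro i
      conv_lhs => rw [f.as_sum]
      rw [map_sum]
      exact Finset.sum_congr rfl fun r _ => rename_monomial _ _ _
    rw [Finset.prod_congr rfl fun i _ => hstep i, Finset.prod_univ_sum]
    exact Finset.sum_congr rfl fun t _ => prod_monomial _ _ _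
  rw [hexp, coeff_sum]
  have hterm : ∀ t ∈ Fintype.piFinset (fun _ : Fin m => f.support),
      coeff (stairP (1 : Perm (Fin (m * k))))
          (monomial (∑ i : Fin m, Finsupp.mapDomain (g i) (t i))
            (∏ i : Fin m, coeff (t i) f))
        = if t = t₀ then ∏ i : Fin m, coeff (t i) f else 0 := by
    intro t _
    rw [coeff_monomial]
    split_ifs with h1 h2 h2
    · rfl
    · exact absurd (key2 t h1) h2
    · exact absurd (h2 ▸ key1) h1
    · rfl
  rw [Finset.sum_congr rfl hterm]
  have hrhs : ∀ i : Fin m, coeffOf f (fun j => ((π (bpos m k i j)) : ℕ)) = coeff (t₀ i) f := by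
    intro i
    rfl
  rw [Finset.prod_congr rfl fun i _ => hrhs i]
  by_cases ht : t₀ ∈ Fintype.piFinset (fun _ : Fin m => f.support)
  · rw [Finset.sum_ite_eq' (Fintype.piFinset (fun _ : Fin m => f.support)) t₀
      (fun t => ∏ i : Fin m, coeff (t i) f)]
    rw [if_pos ht]
  · rw [Finset.sum_ite_eq' (Fintype.piFinset (fun _ : Fin m => f.support)) t₀
      (fun t => ∏ i : Fin m, coeff (t i) f)]
    rw [if_neg ht]
    obtain ⟨i₀, hi₀⟩ : ∃ i₀, t₀ i₀ ∉ f.support := by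
      by_contra hc
      push_neg at hc
      exact ht (Fintype.mem_piFinset.mpr hc)
    have hzero : ∏ i : Fin m, coeff (t₀ i) f = 0 :=
      Finset.prod_eq_zero (mem_univ i₀) (Finsupp.notMem_support_iff.mp hi₀)
    rw [hzero]

lemma coeff_stair_hyperPf (hhom : f.IsHomogeneous (k / 2 * (m * k - 1))) :
    coeff (stairP (1 : Perm (Fin (m * k)))) (hyperPfPoly m k f)
      = ∑ e ∈ Finset.univ.filter (IsWeightRep m k),
          (Equiv.Perm.sign e : ℤ) •
            ∏ i : Fin m, coeffOf f fun j => ((e (bpos m k i j)) : ℕ) := by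
  unfold hyperPfPoly
  rw [coeff_sum]
  have h1 : ∀ π ∈ Finset.univ.filter (IsPartRep m k),
      coeff (stairP (1 : Perm (Fin (m * k))))
          ((Equiv.Perm.sign π : ℤ) •
            ∏ i : Fin m, rename (fun j => π (bpos m k i j)) f)
        = (Equiv.Perm.sign π : ℤ) •
            ∏ i : Fin m, coeffOf f fun j => ((π (bpos m k i j)) : ℕ) := by
    intro π _
    rw [coeff_smul, coeff_stair_prod]
  rw [Finset.sum_congr rfl h1]
  refine (Finset.sum_subset ?_ ?_).symm
  · intro e he
    simp only [Finset.mem_filter] at he ⊢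
    exact ⟨he.1, he.2.1⟩
  · intro π hπ hπ2
    have hrep : IsPartRep m k π := (Finset.mem_filter.mp hπ).2
    have hnw : ¬ IsWeightRep m k π := by
      intro hw
      exact hπ2 (Finset.mem_filter.mpr ⟨Finset.mem_univ _, hw⟩)
    obtain ⟨i₀, hi₀⟩ : ∃ i₀ : Fin m,
        (∑ j : Fin k, ((π (bpos m k i₀ j)) : ℕ)) ≠ k / 2 * (m * k - 1) := by
      by_contra hc
      push_neg at hc
      exact hnw ⟨hrep, hc⟩
    have hz : coeffOf f (fun j => ((π (bpos m k i₀ j)) : ℕ)) = 0 := by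
      apply hhom.coeff_eq_zero
      rw [degree_equivFun]
      exact hi₀
    have hzero : (∏ i : Fin m, coeffOf f fun j => ((π (bpos m k i j)) : ℕ)) = 0 :=
      Finset.prod_eq_zero (mem_univ i₀) hz
    rw [hzero, smul_zero]

end CoeffStair

lemma nsmul_cancel_poly {R : Type*} [Field R] [CharZero R] {τ : Type*}
    {N : ℕ} (hN : 0 < N) {p q : MvPolynomial τ R} (h : N • p = N • q) : p = q := by
  apply MvPolynomial.ext
  intro d
  have h2 : coeff d (N • p) = coeff d (N • q) := by rw [h]
  rw [coeff_smul, coeff_smul] at h2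
  have h3 : (N : R) * coeff d p = (N : R) * coeff d q := by
    rw [← nsmul_eq_mul, ← nsmul_eq_mul]
    exact h2
  exact mul_left_cancel₀ (Nat.cast_ne_zero.mpr hN.ne') h3
end Stmt6Aux
end
theorem stmt6 (m k : ℕ) (hk : Even k) (R : Type*) [Field R] [CharZero R]
    (f : MvPolynomial (Fin k) R)
    (hhom : f.IsHomogeneous (k / 2 * (m * k - 1)))
    (hskew : IsSkewPoly f) :
    hyperPfPoly m k f =
      MvPolynomial.C (∑ e ∈ Finset.univ.filter (IsWeightRep m k),
          (Equiv.Perm.sign e : ℤ) •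
            ∏ i : Fin m, coeffOf f fun j => ((e (bpos m k i j)) : ℕ))
        * vand (m * k) R := by
  classical
  set N := (Finset.univ.filter (Stmt6Aux.IsGrp m k)).card with hN
  have hNpos : 0 < N := Stmt6Aux.grp_card_pos m k
  set CW := (∑ e ∈ Finset.univ.filter (IsWeightRep m k),
      (Equiv.Perm.sign e : ℤ) •
        ∏ i : Fin m, coeffOf f fun j => ((e (bpos m k i j)) : ℕ)) with hCW
  set P := ∑ π : Equiv.Perm (Fin (m * k)), Stmt6Aux.trm m k f π with hP
  have hsum : P = N • hyperPfPoly m k f := Stmt6Aux.sum_trm hk hskew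
  have halt : ∀ σ : Equiv.Perm (Fin (m * k)),
      MvPolynomial.rename ⇑σ P = (Equiv.Perm.sign σ : ℤ) • P :=
    fun σ => Stmt6Aux.rename_sum_trm σ
  have hhomP : P.IsHomogeneous (∑ x : Fin (m * k), (x : ℕ)) := by
    rw [Stmt6Aux.stair_sum_eq hk]
    exact Stmt6Aux.sum_trm_isHomogeneous hhom
  set c := MvPolynomial.coeff (Stmt6Aux.stairP (1 : Equiv.Perm (Fin (m * k)))) P with hc
  have hPvand : P = MvPolynomial.C c * vand (m * k) R := by
    apply MvPolynomial.ext
    intro d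
    rw [MvPolynomial.coeff_C_mul, Stmt6Aux.coeff_vand]
    by_cases hstair : ∃ σ : Equiv.Perm (Fin (m * k)), d = Stmt6Aux.stairP σ
    · obtain ⟨σ₀, rfl⟩ := hstair
      rw [Finset.sum_eq_single σ₀
        (fun σ _ hne => if_neg fun h => hne (Stmt6Aux.stairP_injective h))
        (fun h => absurd (Finset.mem_univ σ₀) h), if_pos rfl]
      have h1 := Stmt6Aux.coeff_mapDomain_alt halt σ₀
        (Stmt6Aux.stairP (1 : Equiv.Perm (Fin (m * k))))
      rw [Stmt6Aux.mapDomain_stairP, mul_one] at h1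
      rw [h1, ← hc, zsmul_eq_mul]
      exact mul_comm _ _
    · push_neg at hstair
      have h0 : MvPolynomial.coeff d P = 0 := by
        by_contra hne
        obtain ⟨σ, hσ⟩ := Stmt6Aux.support_is_stair halt hhomP hne
        exact hstair σ hσ
      rw [h0, Finset.sum_eq_zero (fun σ _ => if_neg fun h => hstair σ h.symm), mul_zero]
  have hcval : c = N • CW := by
    rw [hc, hsum, MvPolynomial.coeff_smul, hCW, Stmt6Aux.coeff_stair_hyperPf hhom]
  have hfinal : N • hyperPfPoly m k f = N • (MvPolynomial.C CW * vand (m * k) R) := by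
    rw [← hsum, hPvand, hcval, map_nsmul, smul_mul_assoc]
  exact Stmt6Aux.nsmul_cancel_poly hNpos hfinal
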